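/- Let C be a convex body in the plane containing the origin o, let p ∈ ∂C be (59°, 1/3)-bisecting, and let l be a supporting line of C at p. Then the angle between l and the segment po lies strictly between 29° and 180° − 29°. -/

import Mathlib

open Real EuclideanGeometry

open scoped RealInnerProductSpace

/-- `p` is `(θ, ℓ)`-bisecting in `K` with respect to the origin. -/
def IsBisecting (K : Set (EuclideanSpace ℝ (Fin 2))) (p : EuclideanSpace ℝ (Fin 2))
    (θ ℓ : ℝ) : Prop :=
  ∃ q r : EuclideanSpace ℝ (Fin 2), dist p q = ℓ ∧ dist p r = ℓ ∧
    EuclideanGeometry.angle q p r = θ ∧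
    EuclideanGeometry.angle q p 0 = θ / 2 ∧ EuclideanGeometry.angle r p 0 = θ / 2 ∧
    convexHull ℝ {p, q, r} ⊆ K

/-- Pure algebra core: if unit vectors `a`, `b` both make angle with cosine `K` with the unit
vector `c`, the angle between `a` and `b` has cosine `2K²-1`, and both `a`, `b` have
nonpositive second coordinate, then `c₁² ≤ K²`. -/
lemma stmt8_alg (K c₁ c₂ a₁ a₂ b₁ b₂ : ℝ)
    (ha : a₁^2 + a₂^2 = 1) (hb : b₁^2 + b₂^2 = 1) (hc : c₁^2 + c₂^2 = 1)
    (hac : a₁*c₁ + a₂*c₂ = K) (hbc : b₁*c₁ + b₂*c₂ = K)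
    (hab : a₁*b₁ + a₂*b₂ = 2*K^2 - 1)
    (ha2 : a₂ ≤ 0) (hb2 : b₂ ≤ 0) : c₁^2 ≤ K^2 := by
  have hz : (a₁+b₁-2*K*c₁)^2 + (a₂+b₂-2*K*c₂)^2 = 0 := by
    linear_combination ha + hb + 2*hab - 4*K*hac - 4*K*hbc + 4*K^2*hc
  have h1b : a₂ + b₂ = 2*K*c₂ := by
    nlinarith [sq_nonneg (a₁+b₁-2*K*c₁), sq_nonneg (a₂+b₂-2*K*c₂)]
  have hperp : (a₁-b₁)*c₁ + (a₂-b₂)*c₂ = 0 := by linear_combination hac - hbc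
  have hnorm : (a₁-b₁)^2 + (a₂-b₂)^2 = 4 - 4*K^2 := by
    linear_combination ha + hb - 2*hab
  have hd : (a₂-b₂)^2 = (4-4*K^2)*c₁^2 := by
    linear_combination ((a₂-b₂)*c₂ - (a₁-b₁)*c₁) * hperp - (a₂-b₂)^2 * hc + c₁^2 * hnorm
  have hprod : 0 ≤ a₂ * b₂ := by nlinarith [ha2, hb2]
  have e1 : (a₂+b₂)^2 = (a₂-b₂)^2 + 4*(a₂*b₂) := by ring
  have e2 : 4*K^2*c₂^2 = (a₂-b₂)^2 + 4*(a₂*b₂) := by rw [← e1, h1b]; ring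
  nlinarith [e2, hd, hc, hprod]


lemma stmt8_cos_nonneg : 0 ≤ Real.cos (59 * π / 180 / 2) := by
  apply Real.cos_nonneg_of_mem_Icc
  constructor <;> [linarith [Real.pi_pos]; linarith [Real.pi_pos]]

lemma stmt8_cos_lt : Real.cos (59 * π / 180 / 2) < Real.cos (29 * π / 180) := by
  apply Real.strictAntiOn_cos
  · constructor <;> linarith [Real.pi_pos]
  · constructor <;> linarith [Real.pi_pos]
  · linarith [Real.pi_pos]

lemma stmt8_sq (K K' c : ℝ) (h1 : c^2 ≤ K^2) (h2 : 0 ≤ K) (h3 : K < K') :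
    -K' < c ∧ c < K' := by
  constructor <;> nlinarith

lemma stmt8_angle (A : ℝ) (hA0 : 0 ≤ A) (hApi : A ≤ π)
    (hlt : Real.cos A < Real.cos (29 * π / 180))
    (hgt : -Real.cos (29 * π / 180) < Real.cos A) :
    A ∈ Set.Ioo (29 * π / 180) (π - 29 * π / 180) := by
  have pi_pos := Real.pi_pos
  constructor
  · by_contra h
    push_neg at h
    have := Real.cos_le_cos_of_nonneg_of_le_pi hA0 (by linarith) h
    linarith
  · by_contra h
    push_neg at h
    have := Real.cos_le_cos_of_nonneg_of_le_pi (by linarith : (0:ℝ) ≤ π - 29*π/180) hApi h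
    rw [Real.cos_pi_sub] at this
    linarith

set_option maxHeartbeats 1000000 in
/-- If p ∈ ∂C is (59°, 1/3)-bisecting in a convex body C with the origin in its interior, then
any supporting line l of C at p makes an angle with the segment po strictly between
29° and 180° − 29°. The supporting line is {x | f x = f p} for a nonzero functional f with
C ⊆ {f ≤ f p}; w is any nonzero direction vector of l. -/
theorem stmt_8 (C : Set (EuclideanSpace ℝ (Fin 2))) (hC : Convex ℝ C)
    (h0 : (0 : EuclideanSpace ℝ (Fin 2)) ∈ interior C)
    (p : EuclideanSpace ℝ (Fin 2)) (hp : p ∈ frontier C)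
    (hbis : IsBisecting C p (59 * π / 180) (1 / 3))
    (f : EuclideanSpace ℝ (Fin 2) →L[ℝ] ℝ) (hf : f ≠ 0)
    (hsupp : ∀ x ∈ C, f x ≤ f p)
    (w : EuclideanSpace ℝ (Fin 2)) (hw : w ≠ 0) (hwl : f w = 0) :
    InnerProductGeometry.angle w ((0 : EuclideanSpace ℝ (Fin 2)) - p) ∈
      Set.Ioo (29 * π / 180) (π - 29 * π / 180) := by
  classical
  obtain ⟨q, r, hq, hr, hqr, hq0, hr0, hconv⟩ := hbis
  -- p ≠ 0
  have hpint : p ∉ interior C := by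
    rw [frontier, Set.mem_diff] at hp; exact hp.2
  have hp0 : p ≠ 0 := fun h => hpint (h ▸ h0)
  -- Riesz vector n
  set n : EuclideanSpace ℝ (Fin 2) := (InnerProductSpace.toDual ℝ (EuclideanSpace ℝ (Fin 2))).symm f with hn_def
  have hn : ∀ x : EuclideanSpace ℝ (Fin 2), ⟪n, x⟫ = f x := fun x => InnerProductSpace.toDual_symm_apply
  have hn0 : n ≠ 0 := by
    intro h
    apply hf
    ext x
    have := hn x
    rw [h] at this
    simpa using this.symm
  have hwn : ⟪n, w⟫ = 0 := (hn w).trans hwl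
  have hwn' : ⟪w, n⟫ = 0 := by rw [real_inner_comm]; exact hwn
  have hWpos : (0:ℝ) < ‖w‖ := norm_pos_iff.mpr hw
  have hNpos : (0:ℝ) < ‖n‖ := norm_pos_iff.mpr hn0
  -- {w, n} spans E
  have hli : LinearIndependent ℝ ![w, n] := by
    rw [LinearIndependent.pair_iff]
    intro s t hst
    have h1 : ⟪w, s • w + t • n⟫ = (0:ℝ) := by rw [hst, inner_zero_right]
    rw [inner_add_right, real_inner_smul_right, real_inner_smul_right, hwn',
      real_inner_self_eq_norm_sq, mul_zero, add_zero] at h1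
    have h2 : ⟪n, s • w + t • n⟫ = (0:ℝ) := by rw [hst, inner_zero_right]
    rw [inner_add_right, real_inner_smul_right, real_inner_smul_right, hwn,
      real_inner_self_eq_norm_sq, mul_zero, zero_add] at h2
    constructor
    · rcases mul_eq_zero.mp h1 with h | h
      · exact h
      · exact absurd h (by positivity)
    · rcases mul_eq_zero.mp h2 with h | h
      · exact h
      · exact absurd h (by positivity)
  have hr2 : Set.range ![w, n] = {w, n} := by
    ext x
    simp only [Set.mem_range, Fin.exists_fin_two, Matrix.cons_val_zero, Matrix.cons_val_one,
      Matrix.head_cons, Set.mem_insert_iff, Set.mem_singleton_iff]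
    tauto
  have hspan : Submodule.span ℝ ({w, n} : Set (EuclideanSpace ℝ (Fin 2))) = ⊤ := by
    apply Submodule.eq_top_of_finrank_eq
    rw [← hr2, finrank_span_eq_card hli]
    simp [finrank_euclideanSpace_fin]
  have hrep : ∀ x : EuclideanSpace ℝ (Fin 2), ∃ a b : ℝ, x = a • w + b • n := by
    intro x
    have hx : x ∈ Submodule.span ℝ ({w, n} : Set (EuclideanSpace ℝ (Fin 2))) := hspan ▸ Submodule.mem_top
    obtain ⟨a, b, h⟩ := Submodule.mem_span_pair.1 hx
    exact ⟨a, b, h.symm⟩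
  -- inner product formulas
  have cross : ∀ (a b a' b' : ℝ),
      ⟪a • w + b • n, a' • w + b' • n⟫ = a*a'*‖w‖^2 + b*b'*‖n‖^2 := by
    intro a b a' b'
    simp only [inner_add_left, inner_add_right, real_inner_smul_left, real_inner_smul_right,
      hwn, hwn', real_inner_self_eq_norm_sq, mul_zero, add_zero, zero_add]
    ring
  have normsq : ∀ (a b : ℝ), ‖a • w + b • n‖^2 = a^2*‖w‖^2 + b^2*‖n‖^2 := by
    intro a b
    rw [← real_inner_self_eq_norm_sq, cross]
    ring
  -- the three vectors
  set u : EuclideanSpace ℝ (Fin 2) := q - p with hu_def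
  set v : EuclideanSpace ℝ (Fin 2) := r - p with hv_def
  set m : EuclideanSpace ℝ (Fin 2) := (0:EuclideanSpace ℝ (Fin 2)) - p with hm_def
  have hum : ‖m‖ = ‖p‖ := by rw [hm_def, zero_sub, norm_neg]
  have hMpos : (0:ℝ) < ‖m‖ := by rw [hum]; exact norm_pos_iff.mpr hp0
  have hUnorm : ‖u‖ = 1/3 := by
    rw [hu_def, ← norm_sub_rev, ← dist_eq_norm]; exact hq
  have hVnorm : ‖v‖ = 1/3 := by
    rw [hv_def, ← norm_sub_rev, ← dist_eq_norm]; exact hr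
  have hUpos : (0:ℝ) < ‖u‖ := by rw [hUnorm]; norm_num
  have hVpos : (0:ℝ) < ‖v‖ := by rw [hVnorm]; norm_num
  -- membership and functional bounds
  have hqC : q ∈ C := hconv (subset_convexHull ℝ _ (by simp))
  have hrC : r ∈ C := hconv (subset_convexHull ℝ _ (by simp))
  have hfu : ⟪n, u⟫ ≤ 0 := by
    rw [hu_def, hn, map_sub]
    have := hsupp q hqC
    linarith
  have hfv : ⟪n, v⟫ ≤ 0 := by
    rw [hv_def, hn, map_sub]
    have := hsupp r hrC
    linarith
  -- angle facts as inner products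
  set t : ℝ := 59 * π / 180 / 2 with ht_def
  have pi_pos := Real.pi_pos
  have hcos_u : ⟪u, m⟫ = Real.cos t * (‖u‖ * ‖m‖) := by
    have h1 : InnerProductGeometry.angle u m = t := by
      rw [hu_def, hm_def]
      simpa [EuclideanGeometry.angle, vsub_eq_sub] using hq0
    have h2 := InnerProductGeometry.cos_angle u m
    rw [h1] at h2
    field_simp at h2 ⊢
    linarith
  have hcos_v : ⟪v, m⟫ = Real.cos t * (‖v‖ * ‖m‖) := by
    have h1 : InnerProductGeometry.angle v m = t := by
      rw [hv_def, hm_def]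
      simpa [EuclideanGeometry.angle, vsub_eq_sub] using hr0
    have h2 := InnerProductGeometry.cos_angle v m
    rw [h1] at h2
    field_simp at h2 ⊢
    linarith
  have hcos_uv : ⟪u, v⟫ = (2 * (Real.cos t)^2 - 1) * (‖u‖ * ‖v‖) := by
    have h1 : InnerProductGeometry.angle u v = 2 * t := by
      rw [hu_def, hv_def]
      have : (59:ℝ) * π / 180 = 2 * t := by rw [ht_def]; ring
      simpa [EuclideanGeometry.angle, vsub_eq_sub, this] using hqr
    have h2 := InnerProductGeometry.cos_angle u v
    rw [h1, Real.cos_two_mul] at h2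
    field_simp at h2 ⊢
    linarith
  -- coordinates
  obtain ⟨ua, ub, huc⟩ := hrep u
  obtain ⟨va, vb, hvc⟩ := hrep v
  obtain ⟨ma, mb, hmc⟩ := hrep m
  -- normalized coordinates
  set a₁ : ℝ := ua * ‖w‖ / ‖u‖
  set a₂ : ℝ := ub * ‖n‖ / ‖u‖
  set b₁ : ℝ := va * ‖w‖ / ‖v‖
  set b₂ : ℝ := vb * ‖n‖ / ‖v‖
  set c₁ : ℝ := ma * ‖w‖ / ‖m‖
  set c₂ : ℝ := mb * ‖n‖ / ‖m‖
  have hUsq : ‖u‖^2 = ua^2*‖w‖^2 + ub^2*‖n‖^2 := by rw [huc, normsq]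
  have hVsq : ‖v‖^2 = va^2*‖w‖^2 + vb^2*‖n‖^2 := by rw [hvc, normsq]
  have hMsq : ‖m‖^2 = ma^2*‖w‖^2 + mb^2*‖n‖^2 := by rw [hmc, normsq]
  have ha : a₁^2 + a₂^2 = 1 := by
    simp only [a₁, a₂]
    field_simp
    first
    | linear_combination hUsq
    | linear_combination -hUsq
    | nlinarith [hUsq]
  have hb : b₁^2 + b₂^2 = 1 := by
    simp only [b₁, b₂]
    field_simp
    first
    | linear_combination hVsq
    | linear_combination -hVsq
    | nlinarith [hVsq]
  have hc : c₁^2 + c₂^2 = 1 := by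
    simp only [c₁, c₂]
    field_simp
    first
    | linear_combination hMsq
    | linear_combination -hMsq
    | nlinarith [hMsq]
  have hium : ⟪u, m⟫ = ua*ma*‖w‖^2 + ub*mb*‖n‖^2 := by rw [huc, hmc, cross]
  have hivm : ⟪v, m⟫ = va*ma*‖w‖^2 + vb*mb*‖n‖^2 := by rw [hvc, hmc, cross]
  have hiuv : ⟪u, v⟫ = ua*va*‖w‖^2 + ub*vb*‖n‖^2 := by rw [huc, hvc, cross]
  have hac : a₁*c₁ + a₂*c₂ = Real.cos t := by
    have h := hcos_u
    rw [hium] at h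
    simp only [a₁, a₂, c₁, c₂]
    field_simp
    first
    | linear_combination h
    | linear_combination -h
    | nlinarith [h]
  have hbc : b₁*c₁ + b₂*c₂ = Real.cos t := by
    have h := hcos_v
    rw [hivm] at h
    simp only [b₁, b₂, c₁, c₂]
    field_simp
    first
    | linear_combination h
    | linear_combination -h
    | nlinarith [h]
  have hab : a₁*b₁ + a₂*b₂ = 2*(Real.cos t)^2 - 1 := by
    have h := hcos_uv
    rw [hiuv] at h
    simp only [a₁, a₂, b₁, b₂]
    field_simp
    first
    | linear_combination h
    | linear_combination -h
    | nlinarith [h]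
  have hiu_n : ⟪n, u⟫ = ub * ‖n‖^2 := by
    rw [huc]
    simp only [inner_add_right, real_inner_smul_right, hwn, real_inner_self_eq_norm_sq,
      mul_zero, zero_add]
  have hiv_n : ⟪n, v⟫ = vb * ‖n‖^2 := by
    rw [hvc]
    simp only [inner_add_right, real_inner_smul_right, hwn, real_inner_self_eq_norm_sq,
      mul_zero, zero_add]
  have ha2 : a₂ ≤ 0 := by
    have hub : ub ≤ 0 := by
      rw [hiu_n] at hfu
      rcases mul_nonpos_iff.mp hfu with h | h
      · linarith [pow_pos hNpos 2, h.2]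
      · exact h.1
    have : ub * ‖n‖ ≤ 0 := mul_nonpos_of_nonpos_of_nonneg hub hNpos.le
    exact div_nonpos_of_nonpos_of_nonneg this hUpos.le
  have hb2 : b₂ ≤ 0 := by
    have hvb : vb ≤ 0 := by
      rw [hiv_n] at hfv
      rcases mul_nonpos_iff.mp hfv with h | h
      · linarith [pow_pos hNpos 2, h.2]
      · exact h.1
    have : vb * ‖n‖ ≤ 0 := mul_nonpos_of_nonpos_of_nonneg hvb hNpos.le
    exact div_nonpos_of_nonpos_of_nonneg this hVpos.le
  -- main estimate
  have hkey : c₁^2 ≤ (Real.cos t)^2 :=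
    stmt8_alg (Real.cos t) c₁ c₂ a₁ a₂ b₁ b₂ ha hb hc hac hbc hab ha2 hb2
  -- cosine of the target angle equals c₁
  have hiw_m : ⟪w, m⟫ = ma * ‖w‖^2 := by
    rw [hmc]
    simp only [inner_add_right, real_inner_smul_right, hwn', real_inner_self_eq_norm_sq,
      mul_zero, add_zero]
  set A : ℝ := InnerProductGeometry.angle w m with hA_def
  have hcosA : Real.cos A = c₁ := by
    rw [hA_def, InnerProductGeometry.cos_angle, hiw_m]
    simp only [c₁]
    field_simp
  have hKnonneg : 0 ≤ Real.cos t := by rw [ht_def]; exact stmt8_cos_nonneg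
  have hKlt : Real.cos t < Real.cos (29 * π / 180) := by rw [ht_def]; exact stmt8_cos_lt
  obtain ⟨hgt, hlt⟩ := stmt8_sq (Real.cos t) (Real.cos (29 * π / 180)) c₁ hkey hKnonneg hKlt
  rw [← hcosA] at hgt hlt
  exact stmt8_angle A (InnerProductGeometry.angle_nonneg w m)
    (InnerProductGeometry.angle_le_pi w m) hlt hgt
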